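/- arXiv:1706.08167 — 2 statements merged into one kernel-verified Lean document; each statement's English description precedes it below -/
import Mathlib

section
/- Let A ∈ C^{m×n} with m ≥ n have i.i.d. standard complex Gaussian CN(0,1) entries, and let G ∈ C^{n×n} have i.i.d. CN(0,1) entries. Then for every s > 0, Pr( σ_min(A) ≤ s ) ≤ [ Pr( σ_min(G) ≤ s ) ]^{⌊m/n⌋}, where σ_min denotes the smallest singular value. -/
open MeasureTheory ProbabilityTheory Real

noncomputable section

/-- The standard complex Gaussian distribution `CN(0,1)` on `ℂ`:
`a = u + i v` with `u, v` independent real `N(0, 1/2)`. -/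
def cgauss : Measure ℂ :=
  Measure.map (fun p : ℝ × ℝ => (p.1 : ℂ) + p.2 * Complex.I)
    ((gaussianReal 0 (1/2)).prod (gaussianReal 0 (1/2)))

instance (n : ℕ) : MeasurableSpace (EuclideanSpace ℂ (Fin n)) :=
  MeasurableSpace.comap WithLp.ofLp MeasurableSpace.pi
instance (n : ℕ) : BorelSpace (EuclideanSpace ℂ (Fin n)) := PiLp.borelSpace 2

/-- The law of an `m × n` random matrix with i.i.d. `CN(0,1)` entries. -/
def matGauss (m n : ℕ) : Measure (Fin m → Fin n → ℂ) :=
  Measure.pi fun _ : Fin m => Measure.pi fun _ : Fin n => cgauss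

/-- The smallest singular value `σ_min(M) = min_{‖x‖ = 1} ‖M x‖` of an `m × n` complex
matrix. -/
def smin (m n : ℕ) (M : Fin m → Fin n → ℂ) : ℝ :=
  ⨅ x : Metric.sphere (0 : EuclideanSpace ℂ (Fin n)) 1,
    ‖(WithLp.equiv 2 (Fin m → ℂ)).symm
      ((Matrix.of M).mulVec (WithLp.equiv 2 (Fin n → ℂ) x.1))‖

end

noncomputable section auxiliary

instance : IsProbabilityMeasure cgauss := by
  unfold cgauss
  have hf : Measurable (fun p : ℝ × ℝ => (p.1 : ℂ) + p.2 * Complex.I) := by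
    fun_prop
  exact Measure.isProbabilityMeasure_map hf.aemeasurable

instance (m n : ℕ) : IsProbabilityMeasure (matGauss m n) := by
  unfold matGauss; infer_instance

/-- Selecting rows along an injective map can only decrease the smallest singular value. -/
lemma smin_row_select {M k n : ℕ} (e : Fin k → Fin M) (he : Function.Injective e)
    (A : Fin M → Fin n → ℂ) : smin k n (fun i => A (e i)) ≤ smin M n A := by
  unfold smin
  apply ciInf_mono
  · exact ⟨0, by rintro _ ⟨x, rfl⟩; exact norm_nonneg _⟩
  · intro x
    set v : Fin M → ℂ := (Matrix.of A).mulVec (WithLp.equiv 2 (Fin n → ℂ) x.1) with hv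
    have hveq : (Matrix.of fun i => A (e i)).mulVec (WithLp.equiv 2 (Fin n → ℂ) x.1)
        = fun i => v (e i) := rfl
    rw [hveq, EuclideanSpace.norm_eq, EuclideanSpace.norm_eq]
    apply Real.sqrt_le_sqrt
    have h1 : ∀ i, ‖((WithLp.equiv 2 (Fin k → ℂ)).symm (fun i => v (e i))) i‖ = ‖v (e i)‖ :=
      fun i => rfl
    have h2 : ∀ j, ‖((WithLp.equiv 2 (Fin M → ℂ)).symm v) j‖ = ‖v j‖ := fun j => rfl
    simp only [h1, h2]
    calc ∑ i : Fin k, ‖v (e i)‖ ^ 2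
        = ∑ j ∈ Finset.univ.image e, ‖v j‖ ^ 2 := by
          rw [Finset.sum_image (fun a _ b _ hab => he hab)]
      _ ≤ ∑ j : Fin M, ‖v j‖ ^ 2 :=
          Finset.sum_le_sum_of_subset_of_nonneg (Finset.subset_univ _)
            (fun j _ _ => by positivity)

/-- Independence of disjoint row blocks, as an inequality for product events. -/
lemma matGauss_split_le (n r : ℕ) (S : Set (Fin n → Fin n → ℂ)) (T : Set (Fin r → Fin n → ℂ)) :
    matGauss (n + r) n
        {A | (fun i => A (Fin.castAdd r i)) ∈ S ∧ (fun j => A (Fin.natAdd n j)) ∈ T}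
      ≤ matGauss n n S * matGauss r n T := by
  set ν : Measure (Fin n → ℂ) := Measure.pi fun _ : Fin n => cgauss with hν
  have hνprob : IsProbabilityMeasure ν := by infer_instance
  set e1 : ((_ : Fin n ⊕ Fin r) → (Fin n → ℂ)) ≃ᵐ (Fin (n + r) → (Fin n → ℂ)) :=
    MeasurableEquiv.piCongrLeft (fun _ : Fin (n + r) => (Fin n → ℂ)) finSumFinEquiv with he1
  set e2 : ((_ : Fin n ⊕ Fin r) → (Fin n → ℂ)) ≃ᵐ
      ((Fin n → (Fin n → ℂ)) × (Fin r → (Fin n → ℂ))) :=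
    MeasurableEquiv.sumPiEquivProdPi (fun _ : Fin n ⊕ Fin r => (Fin n → ℂ)) with he2
  set split := e1.symm.trans e2 with hsplit
  have mp : MeasurePreserving split (matGauss (n + r) n)
      ((matGauss n n).prod (matGauss r n)) := by
    have m1 : MeasurePreserving e1 (Measure.pi fun _ : Fin n ⊕ Fin r => ν)
        (Measure.pi fun _ : Fin (n + r) => ν) :=
      measurePreserving_piCongrLeft (fun _ : Fin (n + r) => ν) finSumFinEquiv
    have m2 : MeasurePreserving e2 (Measure.pi fun _ : Fin n ⊕ Fin r => ν)
        ((Measure.pi fun _ : Fin n => ν).prod (Measure.pi fun _ : Fin r => ν)) :=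
      measurePreserving_sumPiEquivProdPi (fun _ : Fin n ⊕ Fin r => ν)
    exact m2.comp m1.symm
  have hset : {A : Fin (n + r) → Fin n → ℂ |
      (fun i => A (Fin.castAdd r i)) ∈ S ∧ (fun j => A (Fin.natAdd n j)) ∈ T}
      = split ⁻¹' (S ×ˢ T) := by
    ext A
    have h1 : (split A).1 = fun i => A (Fin.castAdd r i) := by
      funext i
      show (e2 (e1.symm A)).1 i = _
      simp [he1, he2, MeasurableEquiv.sumPiEquivProdPi, MeasurableEquiv.piCongrLeft]
    have h2 : (split A).2 = fun j => A (Fin.natAdd n j) := by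
      funext j
      show (e2 (e1.symm A)).2 j = _
      simp [he1, he2, MeasurableEquiv.sumPiEquivProdPi, MeasurableEquiv.piCongrLeft]
    simp only [Set.mem_setOf_eq, Set.mem_preimage, Set.mem_prod, h1, h2]
  rw [hset]
  calc matGauss (n + r) n (split ⁻¹' (S ×ˢ T))
      ≤ (matGauss (n + r) n).map split (S ×ˢ T) :=
        Measure.le_map_apply split.measurable.aemeasurable _
    _ = ((matGauss n n).prod (matGauss r n)) (S ×ˢ T) := by rw [mp.map_eq]
    _ = matGauss n n S * matGauss r n T := Measure.prod_prod S T

lemma smin_key (n : ℕ) (hn : 0 < n) (s : ℝ) (m : ℕ) :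
    matGauss m n {A | smin m n A ≤ s} ≤ (matGauss n n {G | smin n n G ≤ s}) ^ (m / n) := by
  induction m using Nat.strong_induction_on with
  | _ m IH =>
    rcases lt_or_ge m n with h | h
    · rw [Nat.div_eq_of_lt h, pow_zero]
      exact prob_le_one
    · obtain ⟨r, rfl⟩ : ∃ r, m = n + r := ⟨m - n, (Nat.add_sub_cancel' h).symm⟩
      have hdiv : (n + r) / n = r / n + 1 := by
        rw [add_comm, Nat.add_div_right _ hn]
      rw [hdiv, pow_succ]
      calc matGauss (n + r) n {A | smin (n + r) n A ≤ s}
          ≤ matGauss (n + r) n {A | (fun i => A (Fin.castAdd r i)) ∈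
              {G : Fin n → Fin n → ℂ | smin n n G ≤ s} ∧ (fun j => A (Fin.natAdd n j)) ∈
              {B : Fin r → Fin n → ℂ | smin r n B ≤ s}} := by
            apply measure_mono
            intro A hA
            exact ⟨le_trans (smin_row_select _ (Fin.castAdd_injective n r) A) hA,
              le_trans (smin_row_select _ (fun a b hab => by
                have := congrArg Fin.val hab
                simp only [Fin.natAdd, Nat.add_right_cancel_iff] at this
                exact Fin.ext (by omega)) A) hA⟩
        _ ≤ matGauss n n {G | smin n n G ≤ s} * matGauss r n {B | smin r n B ≤ s} :=
            matGauss_split_le n r _ _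
        _ ≤ matGauss n n {G | smin n n G ≤ s} * (matGauss n n {G | smin n n G ≤ s}) ^ (r / n) :=
            mul_le_mul_right (IH r (by omega)) _
        _ = (matGauss n n {G | smin n n G ≤ s}) ^ (r / n) * matGauss n n {G | smin n n G ≤ s} :=
            mul_comm _ _

end auxiliary

/-- if `A ∈ ℂ^{m×n}` (`m ≥ n`) has i.i.d. `CN(0,1)` entries and `G ∈ ℂ^{n×n}` has
i.i.d. `CN(0,1)` entries, then for every `s > 0`,
`Pr(σ_min(A) ≤ s) ≤ [Pr(σ_min(G) ≤ s)]^⌊m/n⌋`. -/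
theorem smin_tail_power_bound (m n : ℕ) (hmn : n ≤ m) (s : ℝ) (hs : 0 < s) :
    matGauss m n {A | smin m n A ≤ s} ≤ (matGauss n n {G | smin n n G ≤ s}) ^ (m / n) := by
  rcases Nat.eq_zero_or_pos n with hn | hn
  · subst hn
    rw [Nat.div_zero, pow_zero]
    exact prob_le_one
  · exact smin_key n hn s m
end

section
/- Let b1, b2 be independent real standard Gaussian N(0,1) random variables. Then for every θ ∈ [0, π/2], E[ |b1| · |b1·sin θ + b2·cos θ| ] = (2/π)·(θ·sin θ + cos θ). -/
open MeasureTheory ProbabilityTheory Real Set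
open scoped ENNReal NNReal

lemma rg_prod_withDensity {f g : ℝ → ℝ≥0∞} (hf : Measurable f) (hg : Measurable g)
    [SigmaFinite (volume.withDensity f)]
    [SigmaFinite (volume.withDensity g)] :
    (volume.withDensity f).prod (volume.withDensity g)
      = ((volume : Measure ℝ).prod volume).withDensity (fun p => f p.1 * g p.2) := by
  refine Measure.prod_eq (μ := volume.withDensity f) (ν := volume.withDensity g) fun s t hs ht => ?_
  rw [withDensity_apply _ (hs.prod ht), ← Measure.prod_restrict,
    lintegral_prod_mul hf.aemeasurable hg.aemeasurable,
    withDensity_apply _ hs, withDensity_apply _ ht]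

lemma rg_radial : ∫ r in Set.Ioi (0:ℝ), r^3 * rexp (-r^2/2) = 2 := by
  have hderiv : ∀ x ∈ Set.Ioi (0:ℝ),
      HasDerivAt (fun r : ℝ => -(r^2+2) * rexp (-r^2/2)) (x^3 * rexp (-x^2/2)) x := by
    intro x _
    have h1 : HasDerivAt (fun r : ℝ => -r^2/2) (-x) x := by
      have := ((hasDerivAt_pow 2 x).neg).div_const 2
      refine this.congr_deriv ?_
      ring
    have h2 : HasDerivAt (fun r : ℝ => rexp (-r^2/2)) (rexp (-x^2/2) * (-x)) x := h1.exp
    have h3 : HasDerivAt (fun r : ℝ => -(r^2+2)) (-(2*x)) x := by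
      have := ((hasDerivAt_pow 2 x).add_const 2).neg
      refine this.congr_deriv ?_
      simp [mul_comm]
    have := h3.mul h2
    refine this.congr_deriv ?_
    ring
  have hcont : ContinuousWithinAt (fun r : ℝ => -(r^2+2) * rexp (-r^2/2)) (Set.Ici 0) 0 :=
    (by fun_prop : Continuous fun r : ℝ => -(r^2+2) * rexp (-r^2/2)).continuousWithinAt
  have hnonneg : ∀ x ∈ Set.Ioi (0:ℝ), 0 ≤ x^3 * rexp (-x^2/2) := by
    intro x hx
    have : (0:ℝ) < x := hx
    positivity
  have htend : Filter.Tendsto (fun r : ℝ => -(r^2+2) * rexp (-r^2/2)) Filter.atTop (nhds 0) := by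
    have h1 := Real.tendsto_pow_mul_exp_neg_atTop_nhds_zero 1
    have h0 : Filter.Tendsto (fun x : ℝ => rexp (-x)) Filter.atTop (nhds 0) :=
      Real.tendsto_exp_neg_atTop_nhds_zero
    have hc : Filter.Tendsto (fun u : ℝ => -(2*(u^1*rexp (-u)) + 2*rexp (-u)))
        Filter.atTop (nhds 0) := by
      have := ((h1.const_mul 2).add (h0.const_mul 2)).neg
      simpa using this
    have hq : Filter.Tendsto (fun r : ℝ => r^2/2) Filter.atTop Filter.atTop := by
      apply Filter.Tendsto.atTop_div_const (by norm_num)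
      exact Filter.tendsto_pow_atTop (two_ne_zero)
    have := hc.comp hq
    convert this using 2 with r
    simp only [Function.comp]
    rw [show -(r:ℝ)^2/2 = -(r^2/2) by ring]
    ring
  have := MeasureTheory.integral_Ioi_of_hasDerivAt_of_nonneg hcont hderiv hnonneg htend
  rw [this]
  norm_num

lemma rg_angular (θ : ℝ) (h0 : 0 ≤ θ) (h1 : θ ≤ π/2) :
    ∫ φ in (-π)..π, |Real.cos φ| * |Real.sin (θ + φ)| = 2 * (θ * Real.sin θ + Real.cos θ) := by
  have hπ := Real.pi_pos
  set F : ℝ → ℝ := fun φ => -Real.cos (θ + 2*φ)/4 + φ * Real.sin θ / 2 with hFdef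
  have hF : ∀ φ : ℝ, HasDerivAt F (Real.cos φ * Real.sin (θ + φ)) φ := by
    intro φ
    have h2 : HasDerivAt (fun φ : ℝ => θ + 2*φ) 2 φ := by
      simpa using ((hasDerivAt_id φ).const_mul 2).const_add θ
    have h3 : HasDerivAt (fun φ : ℝ => Real.cos (θ + 2*φ)) (-Real.sin (θ + 2*φ) * 2) φ := h2.cos
    have h4 : HasDerivAt (fun φ : ℝ => φ * Real.sin θ / 2) (Real.sin θ / 2) φ := by
      simpa using ((hasDerivAt_id φ).mul_const (Real.sin θ)).div_const 2
    have := ((h3.neg).div_const 4).add h4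
    refine this.congr_deriv ?_
    have hA := Real.sin_add (θ + φ) φ
    rw [show (θ+φ)+φ = θ+2*φ by ring] at hA
    have hB : Real.sin θ = Real.sin (θ+φ) * Real.cos φ - Real.cos (θ+φ) * Real.sin φ := by
      simpa using Real.sin_sub (θ+φ) φ
    field_simp
    nlinarith [hA, hB]
  have hkey : ∀ a b : ℝ, ∫ φ in a..b, Real.cos φ * Real.sin (θ + φ) = F b - F a := by
    intro a b
    refine intervalIntegral.integral_eq_sub_of_hasDerivAt (fun x _ => hF x) ?_
    apply Continuous.intervalIntegrable
    exact Real.continuous_cos.mul (Real.continuous_sin.comp (continuous_const.add continuous_id))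
  have habs : ∀ a b : ℝ, IntervalIntegrable (fun φ => |Real.cos φ| * |Real.sin (θ + φ)|)
      volume a b := by
    intro a b
    apply Continuous.intervalIntegrable
    exact Real.continuous_cos.abs.mul
      ((Real.continuous_sin.comp (continuous_const.add continuous_id)).abs)
  -- split into 5 pieces
  have hsplit : ∫ φ in (-π)..π, |Real.cos φ| * |Real.sin (θ + φ)|
      = (∫ φ in (-π)..(-(π/2)), |Real.cos φ| * |Real.sin (θ + φ)|)
      + (∫ φ in (-(π/2))..(-θ), |Real.cos φ| * |Real.sin (θ + φ)|)
      + (∫ φ in (-θ)..(π/2), |Real.cos φ| * |Real.sin (θ + φ)|)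
      + (∫ φ in (π/2)..(π - θ), |Real.cos φ| * |Real.sin (θ + φ)|)
      + (∫ φ in (π - θ)..π, |Real.cos φ| * |Real.sin (θ + φ)|) := by
    rw [intervalIntegral.integral_add_adjacent_intervals (habs _ _) (habs _ _),
      intervalIntegral.integral_add_adjacent_intervals (habs _ _) (habs _ _),
      intervalIntegral.integral_add_adjacent_intervals (habs _ _) (habs _ _),
      intervalIntegral.integral_add_adjacent_intervals (habs _ _) (habs _ _)]
  rw [hsplit]
  -- piece 1 : [-π, -π/2], cos ≤ 0, sin(θ+φ) ≤ 0
  have p1 : ∫ φ in (-π)..(-(π/2)), |Real.cos φ| * |Real.sin (θ + φ)|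
      = F (-(π/2)) - F (-π) := by
    rw [← hkey]
    apply intervalIntegral.integral_congr
    intro φ hφ
    rw [Set.uIcc_of_le (by linarith)] at hφ
    obtain ⟨ha, hb⟩ := hφ
    have hc : Real.cos φ ≤ 0 := by
      rw [← Real.cos_neg]
      exact Real.cos_nonpos_of_pi_div_two_le_of_le (by linarith) (by linarith)
    have hs : Real.sin (θ + φ) ≤ 0 :=
      Real.sin_nonpos_of_nonpos_of_neg_pi_le (by linarith) (by linarith)
    show |Real.cos φ| * |Real.sin (θ + φ)| = Real.cos φ * Real.sin (θ + φ)
    rw [abs_of_nonpos hc, abs_of_nonpos hs, neg_mul_neg]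
  -- piece 2 : [-π/2, -θ], cos ≥ 0, sin(θ+φ) ≤ 0
  have p2 : ∫ φ in (-(π/2))..(-θ), |Real.cos φ| * |Real.sin (θ + φ)|
      = -(F (-θ) - F (-(π/2))) := by
    rw [← hkey, ← intervalIntegral.integral_neg]
    apply intervalIntegral.integral_congr
    intro φ hφ
    rw [Set.uIcc_of_le (by linarith)] at hφ
    obtain ⟨ha, hb⟩ := hφ
    have hc : 0 ≤ Real.cos φ :=
      Real.cos_nonneg_of_neg_pi_div_two_le_of_le (by linarith) (by linarith)
    have hs : Real.sin (θ + φ) ≤ 0 :=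
      Real.sin_nonpos_of_nonpos_of_neg_pi_le (by linarith) (by linarith)
    show |Real.cos φ| * |Real.sin (θ + φ)| = -(Real.cos φ * Real.sin (θ + φ))
    rw [abs_of_nonneg hc, abs_of_nonpos hs]
    ring
  -- piece 3 : [-θ, π/2], cos ≥ 0, sin(θ+φ) ≥ 0
  have p3 : ∫ φ in (-θ)..(π/2), |Real.cos φ| * |Real.sin (θ + φ)|
      = F (π/2) - F (-θ) := by
    rw [← hkey]
    apply intervalIntegral.integral_congr
    intro φ hφ
    rw [Set.uIcc_of_le (by linarith)] at hφ
    obtain ⟨ha, hb⟩ := hφ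
    have hc : 0 ≤ Real.cos φ :=
      Real.cos_nonneg_of_neg_pi_div_two_le_of_le (by linarith) (by linarith)
    have hs : 0 ≤ Real.sin (θ + φ) :=
      Real.sin_nonneg_of_nonneg_of_le_pi (by linarith) (by linarith)
    show |Real.cos φ| * |Real.sin (θ + φ)| = Real.cos φ * Real.sin (θ + φ)
    rw [abs_of_nonneg hc, abs_of_nonneg hs]
  -- piece 4 : [π/2, π-θ], cos ≤ 0, sin(θ+φ) ≥ 0
  have p4 : ∫ φ in (π/2)..(π - θ), |Real.cos φ| * |Real.sin (θ + φ)|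
      = -(F (π - θ) - F (π/2)) := by
    rw [← hkey, ← intervalIntegral.integral_neg]
    apply intervalIntegral.integral_congr
    intro φ hφ
    rw [Set.uIcc_of_le (by linarith)] at hφ
    obtain ⟨ha, hb⟩ := hφ
    have hc : Real.cos φ ≤ 0 :=
      Real.cos_nonpos_of_pi_div_two_le_of_le (by linarith) (by linarith)
    have hs : 0 ≤ Real.sin (θ + φ) :=
      Real.sin_nonneg_of_nonneg_of_le_pi (by linarith) (by linarith)
    show |Real.cos φ| * |Real.sin (θ + φ)| = -(Real.cos φ * Real.sin (θ + φ))
    rw [abs_of_nonpos hc, abs_of_nonneg hs]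
    ring
  -- piece 5 : [π-θ, π], cos ≤ 0, sin(θ+φ) ≤ 0
  have p5 : ∫ φ in (π - θ)..π, |Real.cos φ| * |Real.sin (θ + φ)|
      = F π - F (π - θ) := by
    rw [← hkey]
    apply intervalIntegral.integral_congr
    intro φ hφ
    rw [Set.uIcc_of_le (by linarith)] at hφ
    obtain ⟨ha, hb⟩ := hφ
    have hc : Real.cos φ ≤ 0 :=
      Real.cos_nonpos_of_pi_div_two_le_of_le (by linarith) (by linarith)
    have hs : Real.sin (θ + φ) ≤ 0 := by
      have h := Real.sin_sub_pi (θ + φ)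
      have hge : 0 ≤ Real.sin (θ + φ - π) :=
        Real.sin_nonneg_of_nonneg_of_le_pi (by linarith) (by linarith)
      linarith [h ▸ hge]
    show |Real.cos φ| * |Real.sin (θ + φ)| = Real.cos φ * Real.sin (θ + φ)
    rw [abs_of_nonpos hc, abs_of_nonpos hs, neg_mul_neg]
  rw [p1, p2, p3, p4, p5]
  -- evaluate F at the endpoints
  have e1 : F (-π) = -Real.cos θ/4 - π * Real.sin θ / 2 := by
    show -Real.cos (θ + 2*(-π))/4 + (-π) * Real.sin θ / 2 = _
    rw [show θ + 2*(-π) = θ - 2*π by ring, Real.cos_sub_two_pi]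
    ring
  have e2 : F (-(π/2)) = Real.cos θ/4 - π * Real.sin θ / 4 := by
    show -Real.cos (θ + 2*(-(π/2)))/4 + (-(π/2)) * Real.sin θ / 2 = _
    rw [show θ + 2*(-(π/2)) = θ - π by ring, Real.cos_sub_pi]
    ring
  have e3 : F (-θ) = -Real.cos θ/4 - θ * Real.sin θ / 2 := by
    show -Real.cos (θ + 2*(-θ))/4 + (-θ) * Real.sin θ / 2 = _
    rw [show θ + 2*(-θ) = -θ by ring, Real.cos_neg]
    ring
  have e4 : F (π/2) = Real.cos θ/4 + π * Real.sin θ / 4 := by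
    show -Real.cos (θ + 2*(π/2))/4 + (π/2) * Real.sin θ / 2 = _
    rw [show θ + 2*(π/2) = θ + π by ring, Real.cos_add_pi]
    ring
  have e5 : F (π - θ) = -Real.cos θ/4 + (π - θ) * Real.sin θ / 2 := by
    show -Real.cos (θ + 2*(π - θ))/4 + (π - θ) * Real.sin θ / 2 = _
    rw [show θ + 2*(π - θ) = 2*π - θ by ring, Real.cos_two_pi_sub]
  have e6 : F π = -Real.cos θ/4 + π * Real.sin θ / 2 := by
    show -Real.cos (θ + 2*π)/4 + π * Real.sin θ / 2 = _
    rw [Real.cos_add_two_pi]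
  rw [e1, e2, e3, e4, e5, e6]
  ring

/-- For `b₁, b₂` independent real standard Gaussians `N(0,1)` and every
`θ ∈ [0, π/2]`, `E[|b₁| ⬝ |b₁ sin θ + b₂ cos θ|] = (2/π) (θ sin θ + cos θ)`. -/
theorem real_gaussian_h_formula (θ : ℝ) (hθ : θ ∈ Set.Icc 0 (π / 2)) :
    (∫ b : ℝ × ℝ, |b.1| * |b.1 * Real.sin θ + b.2 * Real.cos θ|
        ∂((gaussianReal 0 1).prod (gaussianReal 0 1))) =
      (2 / π) * (θ * Real.sin θ + Real.cos θ) := by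
  obtain ⟨h0, h1⟩ := hθ
  have hπ := Real.pi_pos
  haveI hsf : SigmaFinite (volume.withDensity (gaussianPDF 0 1)) := by
    rw [← gaussianReal_of_var_ne_zero 0 one_ne_zero]; infer_instance
  set d : ℝ → ℝ≥0 := fun x => (gaussianPDFReal 0 1 x).toNNReal with hd
  have hdens : (fun p : ℝ × ℝ => gaussianPDF 0 1 p.1 * gaussianPDF 0 1 p.2)
      = fun p => ((d p.1 * d p.2 : ℝ≥0) : ℝ≥0∞) := by
    funext p
    simp [gaussianPDF, ENNReal.ofReal, hd, ENNReal.coe_mul]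
  have hdmeas : Measurable (fun p : ℝ × ℝ => d p.1 * d p.2) :=
    (((measurable_gaussianPDFReal 0 1).real_toNNReal).comp measurable_fst).mul
      (((measurable_gaussianPDFReal 0 1).real_toNNReal).comp measurable_snd)
  rw [gaussianReal_of_var_ne_zero 0 one_ne_zero,
    rg_prod_withDensity (measurable_gaussianPDF 0 1) (measurable_gaussianPDF 0 1),
    hdens, integral_withDensity_eq_integral_smul hdmeas, ← Measure.volume_eq_prod,
    ← integral_comp_polarCoord_symm
      (fun p : ℝ × ℝ => (d p.1 * d p.2) • (|p.1| * |p.1 * Real.sin θ + p.2 * Real.cos θ|)),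
    polarCoord_target]
  have step : (∫ p in Set.Ioi (0:ℝ) ×ˢ Set.Ioo (-π) π,
        p.1 • ((fun p : ℝ × ℝ => (d p.1 * d p.2) •
          (|p.1| * |p.1 * Real.sin θ + p.2 * Real.cos θ|)) (polarCoord.symm p)))
      = ∫ p in Set.Ioi (0:ℝ) ×ˢ Set.Ioo (-π) π,
        ((2*π)⁻¹ * (p.1^3 * rexp (-p.1^2/2))) * (|Real.cos p.2| * |Real.sin (θ + p.2)|) := by
    apply setIntegral_congr_fun (measurableSet_Ioi.prod measurableSet_Ioo)
    rintro ⟨r, φ⟩ ⟨hr, hφ⟩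
    have hrpos : (0:ℝ) < r := hr
    show r • ((d ((polarCoord.symm (r, φ)).1) * d ((polarCoord.symm (r, φ)).2)) •
        (|(polarCoord.symm (r, φ)).1| *
          |(polarCoord.symm (r, φ)).1 * Real.sin θ + (polarCoord.symm (r, φ)).2 * Real.cos θ|)) = _
    rw [polarCoord_symm_apply]
    simp only [smul_eq_mul, NNReal.smul_def, NNReal.coe_mul]
    have hcoe : ∀ x : ℝ, ((d x : ℝ≥0) : ℝ) = gaussianPDFReal 0 1 x := fun x =>
      Real.coe_toNNReal _ (gaussianPDFReal_nonneg 0 1 x)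
    have hpdf : ∀ x : ℝ, gaussianPDFReal 0 1 x = (Real.sqrt (2*π))⁻¹ * rexp (-x^2/2) := by
      intro x; simp [gaussianPDFReal]
    rw [hcoe, hcoe, hpdf, hpdf]
    have habs1 : |r * Real.cos φ| = r * |Real.cos φ| := by
      rw [abs_mul, abs_of_pos hrpos]
    have h2 : r * Real.cos φ * Real.sin θ + r * Real.sin φ * Real.cos θ
        = r * Real.sin (θ + φ) := by
      rw [Real.sin_add]; ring
    rw [habs1, h2, abs_mul, abs_of_pos hrpos]
    have hexp : rexp (-(r*Real.cos φ)^2/2) * rexp (-(r*Real.sin φ)^2/2) = rexp (-r^2/2) := by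
      rw [← Real.exp_add]
      congr 1
      have h := Real.sin_sq_add_cos_sq φ
      nlinarith [h]
    have hsq : (Real.sqrt (2*π))⁻¹ * (Real.sqrt (2*π))⁻¹ = (2*π)⁻¹ := by
      rw [← mul_inv, Real.mul_self_sqrt (by positivity)]
    rw [← hexp, ← hsq]
    ring
  rw [step, Measure.volume_eq_prod,
    setIntegral_prod_mul (fun r : ℝ => (2*π)⁻¹ * (r^3 * rexp (-r^2/2)))
      (fun φ : ℝ => |Real.cos φ| * |Real.sin (θ + φ)|),
    MeasureTheory.integral_const_mul, rg_radial,
    ← MeasureTheory.integral_Ioc_eq_integral_Ioo,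
    ← intervalIntegral.integral_of_le (by linarith : -π ≤ π),
    rg_angular θ h0 h1]
  field_simp
end
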